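/- Let A, B ∈ Matrix (Fin M) (Fin N) ℝ be matrices of full column rank, i.e. AᵀA and BᵀB are invertible. Define the Moore–Penrose pseudo-inverses A⁺ = (AᵀA)⁻¹Aᵀ and B⁺ = (BᵀB)⁻¹Bᵀ. Then in the operator (spectral) norm: ‖A⁺ − B⁺‖ ≤ √2 · ‖A⁺‖ · ‖B⁺‖ · ‖A − B‖. -/

import Mathlib

open Matrix

/-- Operator (spectral) 2-norm of a real matrix. -/
noncomputable def matOpNorm {m n : ℕ} (A : Matrix (Fin m) (Fin n) ℝ) : ℝ :=
  ‖LinearMap.toContinuousLinearMap (Matrix.toEuclideanLin A)‖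

/-- The Moore–Penrose pseudo-inverse of a full-column-rank matrix:
`A⁺ = (AᵀA)⁻¹Aᵀ`. -/
noncomputable def pinv {m n : ℕ} (A : Matrix (Fin m) (Fin n) ℝ) :
    Matrix (Fin n) (Fin m) ℝ :=
  (Aᵀ * A)⁻¹ * Aᵀ

section AuxWedin

noncomputable def matCLM {m n : ℕ} (A : Matrix (Fin m) (Fin n) ℝ) :
    EuclideanSpace ℝ (Fin n) →L[ℝ] EuclideanSpace ℝ (Fin m) :=
  LinearMap.toContinuousLinearMap (Matrix.toEuclideanLin A)

lemma matCLM_mul {m n p : ℕ} (X : Matrix (Fin m) (Fin n) ℝ) (Y : Matrix (Fin n) (Fin p) ℝ) :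
    matCLM (X * Y) = (matCLM X).comp (matCLM Y) := by
  ext x i
  simp [matCLM, Matrix.toEuclideanLin, Matrix.mulVec_mulVec]

lemma matCLM_one {n : ℕ} : matCLM (1 : Matrix (Fin n) (Fin n) ℝ) = ContinuousLinearMap.id ℝ _ := by
  ext x i
  simp [matCLM, Matrix.toEuclideanLin]

lemma matCLM_add {m n : ℕ} (X Y : Matrix (Fin m) (Fin n) ℝ) :
    matCLM (X + Y) = matCLM X + matCLM Y := by
  ext x i
  simp [matCLM, Matrix.toEuclideanLin, Matrix.add_mulVec]

lemma matCLM_sub {m n : ℕ} (X Y : Matrix (Fin m) (Fin n) ℝ) :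
    matCLM (X - Y) = matCLM X - matCLM Y := by
  ext x i
  simp [matCLM, Matrix.toEuclideanLin, Matrix.sub_mulVec]

lemma matCLM_neg {m n : ℕ} (X : Matrix (Fin m) (Fin n) ℝ) :
    matCLM (-X) = -matCLM X := by
  ext x i
  simp [matCLM, Matrix.toEuclideanLin, Matrix.neg_mulVec]

lemma matCLM_transpose {m n : ℕ} (A : Matrix (Fin m) (Fin n) ℝ) :
    matCLM Aᵀ = ContinuousLinearMap.adjoint (matCLM A) := by
  have h : (Aᵀ : Matrix (Fin n) (Fin m) ℝ) = Aᴴ := by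
    ext i j; simp [conjTranspose]
  rw [matCLM, h, Matrix.toEuclideanLin_conjTranspose_eq_adjoint,
    LinearMap.adjoint_toContinuousLinearMap]
  rfl

lemma matOpNorm_eq {m n : ℕ} (A : Matrix (Fin m) (Fin n) ℝ) : matOpNorm A = ‖matCLM A‖ := rfl

lemma matOpNorm_nonneg {m n : ℕ} (A : Matrix (Fin m) (Fin n) ℝ) : 0 ≤ matOpNorm A :=
  norm_nonneg _

lemma matOpNorm_transpose {m n : ℕ} (A : Matrix (Fin m) (Fin n) ℝ) :
    matOpNorm Aᵀ = matOpNorm A := by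
  rw [matOpNorm_eq, matOpNorm_eq, matCLM_transpose]
  exact LinearIsometryEquiv.norm_map (ContinuousLinearMap.adjoint) _

lemma matOpNorm_neg {m n : ℕ} (A : Matrix (Fin m) (Fin n) ℝ) :
    matOpNorm (-A) = matOpNorm A := by
  rw [matOpNorm_eq, matOpNorm_eq, matCLM_neg, norm_neg]

lemma matOpNorm_mul_le {m n p : ℕ} (X : Matrix (Fin m) (Fin n) ℝ) (Y : Matrix (Fin n) (Fin p) ℝ) :
    matOpNorm (X * Y) ≤ matOpNorm X * matOpNorm Y := by
  rw [matOpNorm_eq, matOpNorm_eq, matOpNorm_eq, matCLM_mul]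
  exact ContinuousLinearMap.opNorm_comp_le _ _

lemma matOpNorm_mul_transpose_self {m n : ℕ} (X : Matrix (Fin m) (Fin n) ℝ) :
    matOpNorm (X * Xᵀ) = matOpNorm X ^ 2 := by
  rw [matOpNorm_eq, matOpNorm_eq, matCLM_mul, matCLM_transpose]
  have := ContinuousLinearMap.norm_adjoint_comp_self (ContinuousLinearMap.adjoint (matCLM X))
  rw [ContinuousLinearMap.adjoint_adjoint] at this
  rw [this, LinearIsometryEquiv.norm_map (ContinuousLinearMap.adjoint) (matCLM X), sq]

lemma proj_pythagoras {m : ℕ} (P : Matrix (Fin m) (Fin m) ℝ) (hPt : Pᵀ = P)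
    (hP2 : P * P = P) (x : EuclideanSpace ℝ (Fin m)) :
    ‖matCLM P x‖ ^ 2 + ‖x - matCLM P x‖ ^ 2 = ‖x‖ ^ 2 := by
  have hadj : ContinuousLinearMap.adjoint (matCLM P) = matCLM P := by
    rw [← matCLM_transpose, hPt]
  have horth : (inner ℝ (matCLM P x) (x - matCLM P x) : ℝ) = 0 := by
    have h1 := ContinuousLinearMap.adjoint_inner_left (matCLM P) (x - matCLM P x) x
    rw [hadj] at h1
    have h2 : matCLM P (x - matCLM P x) = 0 := by
      have : matCLM P (matCLM P x) = matCLM P x := by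
        have := congrArg (fun T => matCLM T x) hP2
        simpa [matCLM_mul] using this
      simp [map_sub, this]
    rw [h1, h2, inner_zero_right]
  have := norm_add_sq_real (matCLM P x) (x - matCLM P x)
  simp only [horth] at this
  have hx : matCLM P x + (x - matCLM P x) = x := by abel
  rw [hx] at this
  linarith
lemma matOpNorm_one_sub_proj_le {m : ℕ} (P : Matrix (Fin m) (Fin m) ℝ) (hPt : Pᵀ = P)
    (hP2 : P * P = P) : matOpNorm (1 - P) ≤ 1 := by
  rw [matOpNorm_eq]
  refine ContinuousLinearMap.opNorm_le_bound _ zero_le_one (fun x => ?_)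
  rw [matCLM_sub, matCLM_one]
  have h := proj_pythagoras P hPt hP2 x
  have h1 : (ContinuousLinearMap.id ℝ (EuclideanSpace ℝ (Fin m)) - matCLM P) x
      = x - matCLM P x := rfl
  rw [h1, one_mul]
  nlinarith [sq_nonneg ‖(matCLM P) x‖, norm_nonneg (x - matCLM P x), norm_nonneg x]

lemma split_bound {m n : ℕ} (T1 T2 : Matrix (Fin n) (Fin m) ℝ) (P : Matrix (Fin m) (Fin m) ℝ)
    (hPt : Pᵀ = P) (hP2 : P * P = P) (h1 : T1 * P = T1) (h2 : T2 * P = 0) (c : ℝ)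
    (hT1 : matOpNorm T1 ≤ c) (hT2 : matOpNorm T2 ≤ c) :
    matOpNorm (T1 + T2) ≤ Real.sqrt 2 * c := by
  have hc : 0 ≤ c := le_trans (matOpNorm_nonneg T1) hT1
  rw [matOpNorm_eq]
  refine ContinuousLinearMap.opNorm_le_bound _ (by positivity) (fun x => ?_)
  set u := ‖matCLM P x‖ with hu
  set v := ‖x - matCLM P x‖ with hv
  have hpyth : u ^ 2 + v ^ 2 = ‖x‖ ^ 2 := proj_pythagoras P hPt hP2 x
  have key : matCLM (T1 + T2) x = matCLM T1 (matCLM P x) + matCLM T2 (x - matCLM P x) := by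
    have e1 : matCLM T1 (matCLM P x) = matCLM T1 x := by
      have := congrArg (fun T => matCLM T x) h1
      simpa [matCLM_mul] using this
    have e2 : matCLM T2 (matCLM P x) = 0 := by
      have := congrArg (fun T => matCLM T x) h2
      simp only [matCLM_mul] at this
      simpa [matCLM, map_zero] using this
    rw [matCLM_add, map_sub, e1, e2]
    simp
  rw [key]
  have b1 : ‖matCLM T1 (matCLM P x)‖ ≤ c * u :=
    le_trans (ContinuousLinearMap.le_opNorm _ _) (by
      exact mul_le_mul_of_nonneg_right hT1 (norm_nonneg _))
  have b2 : ‖matCLM T2 (x - matCLM P x)‖ ≤ c * v :=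
    le_trans (ContinuousLinearMap.le_opNorm _ _) (by
      exact mul_le_mul_of_nonneg_right hT2 (norm_nonneg _))
  have huv : 0 ≤ u := norm_nonneg _
  have hvv : 0 ≤ v := norm_nonneg _
  have hxn : 0 ≤ ‖x‖ := norm_nonneg _
  have hs : Real.sqrt 2 ^ 2 = 2 := Real.sq_sqrt (by norm_num)
  have hsn : 0 ≤ Real.sqrt 2 := Real.sqrt_nonneg 2
  have huvle : u + v ≤ Real.sqrt 2 * ‖x‖ := by
    nlinarith [sq_nonneg (u - v), sq_nonneg (u + v - Real.sqrt 2 * ‖x‖), mul_nonneg hsn hxn]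
  calc ‖matCLM T1 (matCLM P x) + matCLM T2 (x - matCLM P x)‖
      ≤ c * u + c * v := le_trans (norm_add_le _ _) (add_le_add b1 b2)
    _ = c * (u + v) := by ring
    _ ≤ c * (Real.sqrt 2 * ‖x‖) := mul_le_mul_of_nonneg_left huvle hc
    _ = Real.sqrt 2 * c * ‖x‖ := by ring

lemma key_bound {M N : ℕ} (A B : Matrix (Fin M) (Fin N) ℝ)
    (hA : IsUnit (Aᵀ * A).det) (hB : IsUnit (Bᵀ * B).det)
    (hab : matOpNorm (pinv A) ≤ matOpNorm (pinv B)) :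
    matOpNorm (pinv A - pinv B) ≤
      Real.sqrt 2 * matOpNorm (pinv A) * matOpNorm (pinv B) * matOpNorm (A - B) := by
  have hAinv : (Aᵀ * A)⁻¹ * (Aᵀ * A) = 1 := Matrix.nonsing_inv_mul _ hA
  have hAinv' : (Aᵀ * A) * (Aᵀ * A)⁻¹ = 1 := Matrix.mul_nonsing_inv _ hA
  have hBinv : (Bᵀ * B)⁻¹ * (Bᵀ * B) = 1 := Matrix.nonsing_inv_mul _ hB
  have hBinv' : (Bᵀ * B) * (Bᵀ * B)⁻¹ = 1 := Matrix.mul_nonsing_inv _ hB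
  have hpA : pinv A * A = 1 := by rw [pinv, Matrix.mul_assoc]; exact hAinv
  have hpB : pinv B * B = 1 := by rw [pinv, Matrix.mul_assoc]; exact hBinv
  set E := A - B with hE
  set P := B * pinv B with hP
  have hPt : Pᵀ = P := by
    rw [hP, pinv, Matrix.transpose_mul, Matrix.transpose_mul,
      Matrix.transpose_nonsing_inv, Matrix.transpose_mul, Matrix.transpose_transpose,
      Matrix.mul_assoc]
  have hP2 : P * P = P := by
    rw [hP]
    calc B * pinv B * (B * pinv B) = B * (pinv B * B) * pinv B := by
          rw [Matrix.mul_assoc, Matrix.mul_assoc, Matrix.mul_assoc]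
      _ = B * pinv B := by rw [hpB, Matrix.mul_one]
  set T1 := -(pinv A * E * pinv B) with hT1
  set T2 := pinv A * (1 - P) with hT2
  have hdecomp : pinv A - pinv B = T1 + T2 := by
    have e1 : pinv A * E * pinv B = pinv B - pinv A * (B * pinv B) := by
      rw [hE, Matrix.mul_sub, hpA, Matrix.sub_mul, Matrix.one_mul, Matrix.mul_assoc]
    rw [hT1, hT2, e1, hP, Matrix.mul_sub, Matrix.mul_one]
    abel
  have hT1P : T1 * P = T1 := by
    have h : pinv B * (B * pinv B) = pinv B := by
      rw [← Matrix.mul_assoc, hpB, Matrix.one_mul]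
    rw [hT1, hP, Matrix.neg_mul, Matrix.mul_assoc, h]
  have hT2P : T2 * P = 0 := by
    have h : (1 - P) * P = 0 := by
      rw [Matrix.sub_mul, Matrix.one_mul, hP2, sub_self]
    rw [hT2, Matrix.mul_assoc, h, Matrix.mul_zero]
  have hBtP : Bᵀ * (1 - P) = 0 := by
    have h : Bᵀ * P = Bᵀ := by
      rw [hP, pinv]
      simp only [← Matrix.mul_assoc]
      rw [hBinv', Matrix.one_mul]
    rw [Matrix.mul_sub, Matrix.mul_one, h, sub_self]
  have hT2eq : T2 = (Aᵀ * A)⁻¹ * Eᵀ * (1 - P) := by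
    have h : Eᵀ * (1 - P) = Aᵀ * (1 - P) := by
      rw [hE, Matrix.transpose_sub, Matrix.sub_mul, hBtP, sub_zero]
    rw [Matrix.mul_assoc, h, hT2, pinv, Matrix.mul_assoc]
  have hinvAA : (Aᵀ * A)⁻¹ = pinv A * (pinv A)ᵀ := by
    rw [pinv, Matrix.transpose_mul, Matrix.transpose_nonsing_inv, Matrix.transpose_mul,
      Matrix.transpose_transpose]
    calc (Aᵀ * A)⁻¹ = (Aᵀ * A)⁻¹ * ((Aᵀ * A) * (Aᵀ * A)⁻¹) := by rw [hAinv', Matrix.mul_one]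
      _ = (Aᵀ * A)⁻¹ * Aᵀ * (A * (Aᵀ * A)⁻¹) := by
          rw [Matrix.mul_assoc, Matrix.mul_assoc]
  set a := matOpNorm (pinv A) with ha
  set b := matOpNorm (pinv B) with hb'
  set e := matOpNorm E with he
  have ha0 : 0 ≤ a := matOpNorm_nonneg _
  have hb0 : 0 ≤ b := matOpNorm_nonneg _
  have he0 : 0 ≤ e := matOpNorm_nonneg _
  have bnd1 : matOpNorm T1 ≤ a * b * e := by
    rw [hT1, matOpNorm_neg]
    calc matOpNorm (pinv A * E * pinv B) ≤ matOpNorm (pinv A * E) * b :=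
          matOpNorm_mul_le _ _
      _ ≤ a * e * b := by
          exact mul_le_mul_of_nonneg_right (matOpNorm_mul_le _ _) hb0
      _ = a * b * e := by ring
  have bnd2 : matOpNorm T2 ≤ a * b * e := by
    have hAA : matOpNorm ((Aᵀ * A)⁻¹) = a ^ 2 := by
      rw [hinvAA, ha, matOpNorm_mul_transpose_self]
    have h1 : matOpNorm ((Aᵀ * A)⁻¹ * Eᵀ) ≤ a ^ 2 * e := by
      calc matOpNorm ((Aᵀ * A)⁻¹ * Eᵀ) ≤ matOpNorm ((Aᵀ * A)⁻¹) * matOpNorm Eᵀ :=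
            matOpNorm_mul_le _ _
        _ = a ^ 2 * e := by rw [hAA, matOpNorm_transpose]
    calc matOpNorm T2 = matOpNorm ((Aᵀ * A)⁻¹ * Eᵀ * (1 - P)) := by rw [hT2eq]
      _ ≤ matOpNorm ((Aᵀ * A)⁻¹ * Eᵀ) * matOpNorm (1 - P) := matOpNorm_mul_le _ _
      _ ≤ a ^ 2 * e * 1 := by
          apply mul_le_mul h1 (matOpNorm_one_sub_proj_le P hPt hP2) (matOpNorm_nonneg _)
          positivity
      _ = a * a * e := by ring
      _ ≤ a * b * e := mul_le_mul_of_nonneg_right (mul_le_mul_of_nonneg_left hab ha0) he0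
  calc matOpNorm (pinv A - pinv B) = matOpNorm (T1 + T2) := by rw [hdecomp]
    _ ≤ Real.sqrt 2 * (a * b * e) := split_bound T1 T2 P hPt hP2 hT1P hT2P _ bnd1 bnd2
    _ = Real.sqrt 2 * a * b * e := by ring


end AuxWedin

/-- pseudo-inverse perturbation bound
`‖A⁺ − B⁺‖ ≤ √2 ‖A⁺‖ ‖B⁺‖ ‖A − B‖`. -/
theorem pinv_perturbation_bound {M N : ℕ}
    (A B : Matrix (Fin M) (Fin N) ℝ)
    (hA : IsUnit (Aᵀ * A).det) (hB : IsUnit (Bᵀ * B).det) :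
    matOpNorm (pinv A - pinv B) ≤
      Real.sqrt 2 * matOpNorm (pinv A) * matOpNorm (pinv B) * matOpNorm (A - B) := by
  rcases le_total (matOpNorm (pinv A)) (matOpNorm (pinv B)) with h | h
  · exact key_bound A B hA hB h
  · have := key_bound B A hB hA h
    rw [show pinv B - pinv A = -(pinv A - pinv B) by abel, matOpNorm_neg,
      show B - A = -(A - B) by abel, matOpNorm_neg] at this
    linarith [this]
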